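/- arXiv:2308.00272 — 8 statements merged into one kernel-verified Lean document; each statement's English description precedes it below -/
import Mathlib

section
/- Let G = (V, E, c) be a labeled directed graph and G' = (V', E', c) an induced subgraph of G (with the inherited labeling). Then the subspace of Lie(G) spanned by V' together with the labels occurring on edges of G' is a Lie subalgebra of Lie(G), isomorphic to Lie(G'). -/
/-- A finite simple directed graph with edge labels: `lab x y = some l` means there is a
directed edge from `x` to `y` carrying label `l`. Simplicity: no loops, and at most one
of the two directions between a pair of vertices carries an edge. -/
structure LabeledDigraph (V C : Type*) where
  lab : V → V → Option C
  no_loops : ∀ v, lab v v = none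
  one_dir : ∀ x y, (lab x y).isSome → lab y x = none

/-- Adjacency in the underlying undirected graph. -/
def LabeledDigraph.adj {V C : Type*} (G : LabeledDigraph V C) (x y : V) : Prop :=
  (G.lab x y).isSome ∨ (G.lab y x).isSome

/-- A Lie algebra `L` over `F` together with a basis `b` indexed by the vertices and the
labels realizes `Lie(G)` if the bracket of two vertices joined by an edge is the label of
that edge (with a sign given by the orientation, which follows from antisymmetry), the
bracket of non-adjacent vertices is zero, and all labels are central. -/
def IsGraphLieAlg {V C F L : Type*} [Field F] [LieRing L] [LieAlgebra F L]
    (G : LabeledDigraph V C) (b : Module.Basis (V ⊕ C) F L) : Prop :=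
  (∀ (x y : V) (l : C), G.lab x y = some l →
      ⁅b (Sum.inl x), b (Sum.inl y)⁆ = b (Sum.inr l)) ∧
  (∀ x y : V, G.lab x y = none → G.lab y x = none →
      ⁅b (Sum.inl x), b (Sum.inl y)⁆ = 0) ∧
  (∀ (l : C) (z : L), ⁅b (Sum.inr l), z⁆ = 0)

/-- The labels occurring on edges of the subgraph of `G` induced by the vertex set `V'`. -/
def labelsOn {V C : Type*} (G : LabeledDigraph V C) (V' : Set V) : Set C :=
  {l | ∃ x ∈ V', ∃ y ∈ V', G.lab x y = some l}

/-- For an induced subgraph `G'` of `G` on a vertex set `V'`, the span of the vertices of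
`V'` together with the labels occurring on edges of `G'` is a Lie subalgebra of `Lie(G)`,
and it is isomorphic to `Lie(G')`: it carries a basis indexed by the vertices and labels
of `G'` realizing the Lie algebra of the induced labeled directed graph. -/
theorem stmt4 {V C F L : Type*} [Field F] [LieRing L] [LieAlgebra F L]
    (hchar : (2 : F) ≠ 0) (G : LabeledDigraph V C)
    (b : Module.Basis (V ⊕ C) F L) (hb : IsGraphLieAlg G b) (V' : Set V) :
    ∃ K : LieSubalgebra F L,
      (K : Submodule F L) = Submodule.span F
        ((b ∘ Sum.inl) '' V' ∪ (b ∘ Sum.inr) '' labelsOn G V') ∧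
      ∃ b' : Module.Basis (↥V' ⊕ ↥(labelsOn G V')) F K,
        (∀ (x y : ↥V') (l : C) (hl : l ∈ labelsOn G V'), G.lab x.1 y.1 = some l →
            ⁅b' (Sum.inl x), b' (Sum.inl y)⁆ = b' (Sum.inr ⟨l, hl⟩)) ∧
        (∀ x y : ↥V', G.lab x.1 y.1 = none → G.lab y.1 x.1 = none →
            ⁅b' (Sum.inl x), b' (Sum.inl y)⁆ = 0) ∧
        (∀ (l : ↥(labelsOn G V')) (z : K), ⁅b' (Sum.inr l), z⁆ = 0) := by
  classical
  obtain ⟨h1, h2, h3⟩ := hb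
  -- the indexing family
  set g : (↥V' ⊕ ↥(labelsOn G V')) → (V ⊕ C) :=
    Sum.map Subtype.val Subtype.val with hg
  set f : (↥V' ⊕ ↥(labelsOn G V')) → L := fun i => b (g i) with hf
  have hginj : Function.Injective g :=
    Function.Injective.sumMap Subtype.val_injective Subtype.val_injective
  have hli : LinearIndependent F f := b.linearIndependent.comp g hginj
  have hrange : Set.range f = (b ∘ Sum.inl) '' V' ∪ (b ∘ Sum.inr) '' labelsOn G V' := by
    ext z
    constructor
    · rintro ⟨(⟨x, hx⟩ | ⟨l, hl⟩), rfl⟩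
      · exact Or.inl ⟨x, hx, rfl⟩
      · exact Or.inr ⟨l, hl, rfl⟩
    · rintro (⟨x, hx, rfl⟩ | ⟨l, hl, rfl⟩)
      · exact ⟨Sum.inl ⟨x, hx⟩, rfl⟩
      · exact ⟨Sum.inr ⟨l, hl⟩, rfl⟩
  set p : Submodule F L := Submodule.span F (Set.range f) with hp
  have hmem : ∀ i, f i ∈ p := fun i => Submodule.subset_span ⟨i, rfl⟩
  -- brackets of generators stay in p
  have hbr : ∀ i j, ⁅f i, f j⁆ ∈ p := by
    rintro (⟨x, hx⟩ | ⟨l, hl⟩) j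
    · rcases j with ⟨y, hy⟩ | ⟨m, hm⟩
      · -- vertex-vertex
        rcases hxy : G.lab x y with _ | l
        · rcases hyx : G.lab y x with _ | l
          · rw [show f (Sum.inl ⟨x, hx⟩) = b (Sum.inl x) from rfl,
              show f (Sum.inl ⟨y, hy⟩) = b (Sum.inl y) from rfl, h2 x y hxy hyx]
            exact p.zero_mem
          · have : ⁅b (Sum.inl x), b (Sum.inl y)⁆ = -b (Sum.inr l) := by
              rw [← lie_skew, h1 y x l hyx]
            rw [show f (Sum.inl ⟨x, hx⟩) = b (Sum.inl x) from rfl,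
              show f (Sum.inl ⟨y, hy⟩) = b (Sum.inl y) from rfl, this]
            exact p.neg_mem (hmem (Sum.inr ⟨l, y, hy, x, hx, hyx⟩))
        · rw [show f (Sum.inl ⟨x, hx⟩) = b (Sum.inl x) from rfl,
            show f (Sum.inl ⟨y, hy⟩) = b (Sum.inl y) from rfl, h1 x y l hxy]
          exact hmem (Sum.inr ⟨l, x, hx, y, hy, hxy⟩)
      · -- vertex-label
        have : ⁅f (Sum.inl ⟨x, hx⟩), f (Sum.inr ⟨m, hm⟩)⁆ = 0 := by
          rw [← lie_skew, show f (Sum.inr ⟨m, hm⟩) = b (Sum.inr m) from rfl,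
            h3 m _, neg_zero]
        rw [this]; exact p.zero_mem
    · rw [show f (Sum.inr ⟨l, hl⟩) = b (Sum.inr l) from rfl, h3 l _]
      exact p.zero_mem
  have hclosed : ∀ u ∈ p, ∀ w ∈ p, ⁅u, w⁆ ∈ p := by
    intro u hu
    induction hu using Submodule.span_induction with
    | mem u hu =>
      obtain ⟨i, rfl⟩ := hu
      intro w hw
      induction hw using Submodule.span_induction with
      | mem w hw => obtain ⟨j, rfl⟩ := hw; exact hbr i j
      | zero => rw [lie_zero]; exact p.zero_mem
      | add w₁ w₂ _ _ ih₁ ih₂ => rw [lie_add]; exact p.add_mem ih₁ ih₂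
      | smul t w _ ih => rw [lie_smul]; exact p.smul_mem t ih
    | zero => intro w hw; rw [zero_lie]; exact p.zero_mem
    | add u₁ u₂ _ _ ih₁ ih₂ =>
      intro w hw; rw [add_lie]; exact p.add_mem (ih₁ w hw) (ih₂ w hw)
    | smul t u _ ih =>
      intro w hw; rw [smul_lie]; exact p.smul_mem t (ih w hw)
  set K : LieSubalgebra F L :=
    { p with lie_mem' := fun {x y} hx hy => hclosed x hx y hy } with hK
  refine ⟨K, by rw [show (K : Submodule F L) = p from rfl, hp, hrange], ?_⟩
  set b₀ : Module.Basis (↥V' ⊕ ↥(labelsOn G V')) F p := Module.Basis.span hli with hb₀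
  set e : p ≃ₗ[F] K := LinearEquiv.ofEq p (K : Submodule F L) rfl with he
  set b' : Module.Basis (↥V' ⊕ ↥(labelsOn G V')) F K := b₀.map e with hb'
  have hcoe : ∀ i, (b' i : L) = f i := by
    intro i
    rw [hb', Module.Basis.map_apply, he]
    exact congrArg Subtype.val (Module.Basis.span_apply hli i)
  refine ⟨b', ?_, ?_, ?_⟩
  · intro x y l hl hlab
    apply Subtype.ext
    rw [LieSubalgebra.coe_bracket, hcoe, hcoe, hcoe,
      show f (Sum.inl x) = b (Sum.inl x.1) from rfl,
      show f (Sum.inl y) = b (Sum.inl y.1) from rfl, h1 _ _ l hlab]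
    rfl
  · intro x y hxy hyx
    apply Subtype.ext
    rw [LieSubalgebra.coe_bracket, hcoe, hcoe,
      show f (Sum.inl x) = b (Sum.inl x.1) from rfl,
      show f (Sum.inl y) = b (Sum.inl y.1) from rfl, h2 _ _ hxy hyx]
    rfl
  · intro l z
    apply Subtype.ext
    rw [LieSubalgebra.coe_bracket, hcoe,
      show f (Sum.inr l) = b (Sum.inr l.1) from rfl, h3 l.1 _]
    rfl
end

section
/- Let G = (V, E, c) be a labeled directed graph and G' = (V', E', c) an induced subgraph such that for every pair of adjacent vertices x ∈ V' and y ∈ V (adjacent in G), the label c of the edge between x and y occurs as a label of some edge of G'. Then the subspace of Lie(G) spanned by V' and the labels of G' is an ideal of Lie(G). -/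
/-- If for every vertex `x ∈ V'` and every vertex `y` of `G` adjacent to it, the label of
the connecting edge occurs as a label of an edge of the induced subgraph on `V'`, then the
span of `V'` together with the labels of the induced subgraph is an ideal of `Lie(G)`. -/
theorem stmt5 {V C F L : Type*} [Field F] [LieRing L] [LieAlgebra F L]
    (hchar : (2 : F) ≠ 0) (G : LabeledDigraph V C)
    (b : Module.Basis (V ⊕ C) F L) (hb : IsGraphLieAlg G b) (V' : Set V)
    (hclosed : ∀ x ∈ V', ∀ (y : V) (l : C),
        (G.lab x y = some l ∨ G.lab y x = some l) → l ∈ labelsOn G V') :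
    ∃ I : LieIdeal F L, (I : Submodule F L) = Submodule.span F
        ((b ∘ Sum.inl) '' V' ∪ (b ∘ Sum.inr) '' labelsOn G V') := by
  classical
  obtain ⟨h1, h2, h3⟩ := hb
  set S : Set L := (b ∘ Sum.inl) '' V' ∪ (b ∘ Sum.inr) '' labelsOn G V' with hS
  set p : Submodule F L := Submodule.span F S with hp
  -- bracket of a basis vector with a generator lies in p
  have key : ∀ i : V ⊕ C, ∀ m ∈ S, ⁅b i, m⁆ ∈ p := by
    rintro (y | l) m hm
    · rcases hm with ⟨x, hx, rfl⟩ | ⟨l, _, rfl⟩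
      · simp only [Function.comp_apply]
        rcases hxy : G.lab y x with _ | l
        · rcases hyx : G.lab x y with _ | l
          · rw [h2 y x hxy hyx]; exact zero_mem _
          · rw [← lie_skew, h1 x y l hyx]
            exact neg_mem (Submodule.subset_span (Or.inr ⟨l, hclosed x hx y l (Or.inl hyx), rfl⟩))
        · rw [h1 y x l hxy]
          exact Submodule.subset_span (Or.inr ⟨l, hclosed x hx y l (Or.inr hxy), rfl⟩)
      · simp only [Function.comp_apply]
        rw [← lie_skew, h3 l]
        simp
    · rw [h3 l m]; exact zero_mem _
  -- bracket of a basis vector with any element of p lies in p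
  have key2 : ∀ i : V ⊕ C, ∀ m ∈ p, ⁅b i, m⁆ ∈ p := by
    intro i m hm
    induction hm using Submodule.span_induction with
    | mem x hx => exact key i x hx
    | zero => simp
    | add x y _ _ hx hy => rw [lie_add]; exact add_mem hx hy
    | smul a x _ hx => rw [lie_smul]; exact Submodule.smul_mem _ _ hx
  -- bracket of any element with any element of p lies in p
  have key3 : ∀ (x : L), ∀ m ∈ p, ⁅x, m⁆ ∈ p := by
    intro x m hm
    have hx : x ∈ Submodule.span F (Set.range b) := by rw [b.span_eq]; trivial
    induction hx using Submodule.span_induction with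
    | mem z hz => obtain ⟨i, rfl⟩ := hz; exact key2 i m hm
    | zero => simp
    | add u v _ _ hu hv => rw [add_lie]; exact add_mem hu hv
    | smul a u _ hu => rw [smul_lie]; exact Submodule.smul_mem _ _ hu
  exact ⟨{ toSubmodule := p, lie_mem := fun {x m} hm => key3 x m hm }, rfl⟩
end

section
/- Let G be a labeled directed graph and H a connected component of G (as an induced subgraph with inherited labels). Then the span of the vertices of H and the labels occurring on edges of H is an ideal of Lie(G). -/
/-- The connected component (in the underlying undirected graph) of a vertex `v₀`. -/
def component {V C : Type*} (G : LabeledDigraph V C) (v₀ : V) : Set V :=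
  {w | Relation.ReflTransGen G.adj v₀ w}

/-- If `H` is a connected component of `G`, then the span of the vertices of `H` and the
labels occurring on edges of `H` is an ideal of `Lie(G)`. -/
theorem stmt6 {V C F L : Type*} [Field F] [LieRing L] [LieAlgebra F L]
    (hchar : (2 : F) ≠ 0) (G : LabeledDigraph V C)
    (b : Module.Basis (V ⊕ C) F L) (hb : IsGraphLieAlg G b) (v₀ : V) :
    ∃ I : LieIdeal F L, (I : Submodule F L) = Submodule.span F
        ((b ∘ Sum.inl) '' component G v₀ ∪ (b ∘ Sum.inr) '' labelsOn G (component G v₀)) := by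
  obtain ⟨h1, h2, h3⟩ := hb
  set S : Set L := (b ∘ Sum.inl) '' component G v₀ ∪ (b ∘ Sum.inr) '' labelsOn G (component G v₀)
    with hS
  have hcomp : ∀ w ∈ component G v₀, ∀ u, G.adj u w → u ∈ component G v₀ := by
    intro w hw u hadj
    exact Relation.ReflTransGen.tail hw (Or.symm hadj)
  have key : ∀ m ∈ S, ∀ x : L, ⁅x, m⁆ ∈ Submodule.span F S := by
    intro m hm x
    rcases hm with ⟨w, hw, rfl⟩ | ⟨l, hl, rfl⟩
    · have hx : x ∈ Submodule.span F (Set.range b) := by rw [b.span_eq]; trivial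
      refine Submodule.span_induction (p := fun z _ => ⁅z, b (Sum.inl w)⁆ ∈ Submodule.span F S)
        ?_ ?_ ?_ ?_ hx
      · rintro _ ⟨i, rfl⟩
        rcases i with u | l
        · rcases huw : G.lab u w with _ | l
          · rcases hwu : G.lab w u with _ | l
            · rw [h2 u w huw hwu]; exact Submodule.zero_mem _
            · have hub : ⁅b (Sum.inl u), b (Sum.inl w)⁆ = -b (Sum.inr l) := by
                rw [← lie_skew, h1 w u l hwu]
              rw [hub]
              refine neg_mem (Submodule.subset_span (Or.inr ⟨l, ?_, rfl⟩))
              exact ⟨w, hw, u, hcomp w hw u (Or.inr (by simp [hwu])), hwu⟩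
          · rw [h1 u w l huw]
            refine Submodule.subset_span (Or.inr ⟨l, ?_, rfl⟩)
            exact ⟨u, hcomp w hw u (Or.inl (by simp [huw])), w, hw, huw⟩
        · rw [h3]; exact Submodule.zero_mem _
      · show ⁅(0 : L), b (Sum.inl w)⁆ ∈ _
        rw [zero_lie]; exact Submodule.zero_mem _
      · intro y z _ _ hy hz
        show ⁅y + z, b (Sum.inl w)⁆ ∈ _
        rw [add_lie]; exact Submodule.add_mem _ hy hz
      · intro a y _ hy
        show ⁅a • y, b (Sum.inl w)⁆ ∈ _
        rw [smul_lie]; exact Submodule.smul_mem _ _ hy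
    · show ⁅x, b (Sum.inr l)⁆ ∈ _
      have : ⁅x, b (Sum.inr l)⁆ = -⁅b (Sum.inr l), x⁆ := (lie_skew _ _).symm
      rw [this, h3, neg_zero]; exact Submodule.zero_mem _
  refine ⟨{ Submodule.span F S with lie_mem := ?_ }, rfl⟩
  intro x m hm
  refine Submodule.span_induction (p := fun m _ => ⁅x, m⁆ ∈ Submodule.span F S)
    (fun m hm => key m hm x) ?_ ?_ ?_ hm
  · show ⁅x, (0 : L)⁆ ∈ _
    rw [lie_zero]; exact Submodule.zero_mem _
  · intro y z _ _ hy hz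
    show ⁅x, y + z⁆ ∈ _
    rw [lie_add]; exact Submodule.add_mem _ hy hz
  · intro a y _ hy
    show ⁅x, a • y⁆ ∈ _
    rw [lie_smul]; exact Submodule.smul_mem _ _ hy
end

section
/- Let G = (V, E, c) be a labeled directed graph and let ab be a directed edge of G whose label c(a,b) occurs on no other edge of G. Let G' be the graph obtained from G by reversing the direction of the edge ab (keeping its label). Then Lie(G) and Lie(G') are isomorphic Lie algebras. -/
/-- If `a → v` is a directed edge of `G` whose label occurs on no other edge, and `G'` is
obtained from `G` by reversing the direction of this edge (keeping its label and leaving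
everything else unchanged), then `Lie(G)` and `Lie(G')` are isomorphic Lie algebras. -/
theorem stmt7 {V C F L L' : Type*} [Field F]
    [LieRing L] [LieAlgebra F L] [LieRing L'] [LieAlgebra F L']
    (hchar : (2 : F) ≠ 0)
    (G G' : LabeledDigraph V C) (a v : V) (l₀ : C)
    (hedge : G.lab a v = some l₀)
    (huniq : ∀ x y : V, G.lab x y = some l₀ → x = a ∧ y = v)
    (hrev : G'.lab v a = some l₀) (hrev' : G'.lab a v = none)
    (hsame : ∀ x y : V, ¬(x = a ∧ y = v) → ¬(x = v ∧ y = a) → G'.lab x y = G.lab x y)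
    (b : Module.Basis (V ⊕ C) F L) (hb : IsGraphLieAlg G b)
    (b' : Module.Basis (V ⊕ C) F L') (hb' : IsGraphLieAlg G' b') :
    Nonempty (L ≃ₗ⁅F⁆ L') := by
  classical
  obtain ⟨hb1, hb2, hb3⟩ := hb
  obtain ⟨hb'1, hb'2, hb'3⟩ := hb'
  set s : (V ⊕ C) → F := fun i => if i = Sum.inr l₀ then (-1 : F) else 1 with hsdef
  have hss : ∀ i, s i * s i = 1 := by
    intro i; simp only [hsdef]; split <;> ring
  set f : L →ₗ[F] L' := b.constr F (fun i => s i • b' i) with hfdef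
  set g : L' →ₗ[F] L := b'.constr F (fun i => s i • b i) with hgdef
  have hf : ∀ i, f (b i) = s i • b' i := fun i => b.constr_basis F _ i
  have hg : ∀ i, g (b' i) = s i • b i := fun i => b'.constr_basis F _ i
  have hgf : ∀ x, g (f x) = x := by
    intro x
    have : g ∘ₗ f = LinearMap.id := by
      apply b.ext; intro i
      simp [hf, hg, map_smul, smul_smul, hss i]
    simpa using congrArg (fun m => m x) this
  have hfg : ∀ x, f (g x) = x := by
    intro x
    have : f ∘ₗ g = LinearMap.id := by
      apply b'.ext; intro i
      simp [hf, hg, map_smul, smul_smul, hss i]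
    simpa using congrArg (fun m => m x) this
  have hfinl : ∀ x : V, f (b (Sum.inl x)) = b' (Sum.inl x) := by
    intro x; rw [hf]; simp [hsdef]
  -- key computation on basis vectors
  have key : ∀ i j, f ⁅b i, b j⁆ = ⁅f (b i), f (b j)⁆ := by
    rintro (x | l) (y | m)
    · -- vertex, vertex
      rw [hfinl, hfinl]
      rcases hxy : G.lab x y with _ | k
      · rcases hyx : G.lab y x with _ | k
        · -- both none
          rw [hb2 x y hxy hyx, map_zero]
          have hne1 : ¬(x = a ∧ y = v) := by
            rintro ⟨rfl, rfl⟩; rw [hedge] at hxy; exact nomatch hxy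
          have hne2 : ¬(x = v ∧ y = a) := by
            rintro ⟨rfl, rfl⟩; rw [hedge] at hyx; exact nomatch hyx
          have h1 : G'.lab x y = none := (hsame x y hne1 hne2).trans hxy
          have h2 : G'.lab y x = none := by
            rw [hsame y x (fun ⟨h, h'⟩ => hne2 ⟨h', h⟩) (fun ⟨h, h'⟩ => hne1 ⟨h', h⟩)]
            exact hyx
          exact (hb'2 x y h1 h2).symm
        · -- edge y → x labeled k
          have hbr : ⁅b (Sum.inl x), b (Sum.inl y)⁆ = -(b (Sum.inr k)) := by
            rw [← lie_skew, hb1 y x k hyx]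
          rw [hbr, map_neg, hf]
          by_cases hcase : y = a ∧ x = v
          · obtain ⟨rfl, rfl⟩ := hcase
            have hk : k = l₀ := by
              rw [hedge] at hyx; exact (Option.some_inj.mp hyx).symm
            subst hk
            simp only [hsdef, if_pos rfl, neg_smul, one_smul, neg_neg]
            exact (hb'1 x y k hrev).symm
          · have hk : k ≠ l₀ := fun h => hcase (huniq y x (h ▸ hyx))
            have hne2 : ¬(y = v ∧ x = a) := by
              rintro ⟨rfl, rfl⟩
              have := G.one_dir x y (by rw [hedge]; exact rfl)
              rw [this] at hyx; exact nomatch hyx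
            have h1 : G'.lab y x = some k := (hsame y x hcase hne2).trans hyx
            rw [show ⁅b' (Sum.inl x), b' (Sum.inl y)⁆ = -⁅b' (Sum.inl y), b' (Sum.inl x)⁆ from (lie_skew _ _).symm, hb'1 y x k h1]
            simp [hsdef, hk]
      · -- edge x → y labeled k
        rw [hb1 x y k hxy, hf]
        by_cases hcase : x = a ∧ y = v
        · obtain ⟨rfl, rfl⟩ := hcase
          have hk : k = l₀ := by
            rw [hedge] at hxy; exact (Option.some_inj.mp hxy).symm
          subst hk
          simp only [hsdef, if_pos rfl, neg_smul, one_smul]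
          rw [← lie_skew, hb'1 y x k hrev]
        · have hk : k ≠ l₀ := fun h => hcase (huniq x y (h ▸ hxy))
          have hne2 : ¬(x = v ∧ y = a) := by
            rintro ⟨rfl, rfl⟩
            have := G.one_dir y x (by rw [hedge]; exact rfl)
            rw [this] at hxy; exact nomatch hxy
          have h1 : G'.lab x y = some k := (hsame x y hcase hne2).trans hxy
          rw [hb'1 x y k h1]
          simp [hsdef, hk]
    · -- vertex, label
      have h1 : ⁅b (Sum.inl x), b (Sum.inr m)⁆ = 0 := by
        rw [← lie_skew, hb3 m, neg_zero]
      rw [h1, map_zero, hf (Sum.inr m), lie_smul, ← lie_skew, hb'3 m]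
      simp
    · -- label, vertex
      rw [hb3 l, map_zero, hf (Sum.inr l), smul_lie, hb'3 l, smul_zero]
    · -- label, label
      rw [hb3 l, map_zero, hf (Sum.inr l), smul_lie, hb'3 l, smul_zero]
  -- extend to all elements
  have hlie : ∀ x y : L, f ⁅x, y⁆ = ⁅f x, f y⁆ := by
    let B₁ : L →ₗ[F] L →ₗ[F] L' := LinearMap.mk₂ F (fun x y => f ⁅x, y⁆)
      (fun x x' y => by simp [add_lie]) (fun c x y => by simp [smul_lie])
      (fun x y y' => by simp [lie_add]) (fun c x y => by simp [lie_smul])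
    let B₂ : L →ₗ[F] L →ₗ[F] L' := LinearMap.mk₂ F (fun x y => ⁅f x, f y⁆)
      (fun x x' y => by simp [add_lie]) (fun c x y => by simp [smul_lie])
      (fun x y y' => by simp [lie_add]) (fun c x y => by simp [lie_smul])
    have hB : B₁ = B₂ := by
      apply b.ext; intro i; apply b.ext; intro j
      exact key i j
    intro x y
    have h := LinearMap.congr_fun (LinearMap.congr_fun hB x) y
    simpa only [B₁, B₂, LinearMap.mk₂_apply] using h
  exact ⟨{ toFun := f, map_add' := f.map_add, map_smul' := f.map_smul,
           map_lie' := hlie _ _,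
           invFun := g, left_inv := hgf, right_inv := hfg }⟩
end

section
/- Let G = (V, E, c) be a connected labeled directed graph in which every edge has a distinct label (|C| = |E| and c is injective). Let G' be obtained from G by reversing the directions of an arbitrary subset of edges. Then Lie(G) ≅ Lie(G'). -/
/-- If `G` is connected and every edge carries a distinct label (the labeling is a
bijection between edges and labels), and `G'` is obtained from `G` by reversing the
directions of an arbitrary subset of the edges, then `Lie(G) ≅ Lie(G')`. -/
theorem stmt8 {V C F L L' : Type*} [Field F]
    [LieRing L] [LieAlgebra F L] [LieRing L'] [LieAlgebra F L']
    (hchar : (2 : F) ≠ 0)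
    (G G' : LabeledDigraph V C)
    (hconn : ∀ x y : V, Relation.ReflTransGen G.adj x y)
    (hinj : ∀ (x y x' y' : V) (l : C),
        G.lab x y = some l → G.lab x' y' = some l → x = x' ∧ y = y')
    (hsurj : ∀ l : C, ∃ x y : V, G.lab x y = some l)
    (hflip : ∀ x y : V,
        (G'.lab x y = G.lab x y ∧ G'.lab y x = G.lab y x) ∨
        (G'.lab x y = G.lab y x ∧ G'.lab y x = G.lab x y))
    (b : Module.Basis (V ⊕ C) F L) (hb : IsGraphLieAlg G b)
    (b' : Module.Basis (V ⊕ C) F L') (hb' : IsGraphLieAlg G' b') :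
    Nonempty (L ≃ₗ⁅F⁆ L') := by

  classical
  obtain ⟨hb1, hb2, hb3⟩ := hb
  obtain ⟨hb'1, hb'2, hb'3⟩ := hb'
  choose fx fy hf using hsurj
  set u : V ⊕ C → Fˣ := fun i => match i with
    | Sum.inl _ => 1
    | Sum.inr l => if G'.lab (fx l) (fy l) = some l then 1 else -1 with hu
  set b'' := b'.unitsSMul u with hb''
  set e : L ≃ₗ[F] L' := b.equiv b'' (Equiv.refl _) with he
  have heb : ∀ i, e (b i) = (u i : F) • b' i := by
    intro i
    simp [he, hb'', Module.Basis.unitsSMul_apply, Units.smul_def]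
  -- key computation for an edge of G
  have edge : ∀ (x y : V) (l : C), G.lab x y = some l →
      ⁅b' (Sum.inl x), b' (Sum.inl y)⁆ = (u (Sum.inr l) : F) • b' (Sum.inr l) := by
    intro x y l h
    obtain ⟨hx, hy⟩ := hinj x y (fx l) (fy l) l h (hf l)
    have hyx : G.lab y x = none := G.one_dir x y (by simp [h])
    rcases hflip x y with ⟨h1, h2⟩ | ⟨h1, h2⟩
    · have hcond : G'.lab (fx l) (fy l) = some l := by rw [← hx, ← hy]; rw [h1, h]
      simp only [hu, hcond, if_pos]
      rw [hb'1 x y l (h1.trans h)]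
      simp
    · have hxy' : G'.lab x y = none := h1.trans hyx
      have hcond : ¬ G'.lab (fx l) (fy l) = some l := by
        rw [← hx, ← hy, hxy']; simp
      simp only [hu, hcond, if_neg, not_false_iff]
      have := hb'1 y x l (h2.trans h)
      rw [← lie_skew, this]
      simp
  have key : ∀ i j, e ⁅b i, b j⁆ = ⁅e (b i), e (b j)⁆ := by
    rintro (x | l) (y | l')
    · rw [heb, heb]
      simp only [hu]
      rw [Units.val_one, one_smul, one_smul]
      rcases hl : G.lab x y with _ | l
      · rcases hl' : G.lab y x with _ | l'
        · rw [hb2 x y hl hl', hb'2 x y]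
          · simp
          · rcases hflip x y with ⟨h1, _⟩ | ⟨h1, _⟩
            · exact h1.trans hl
            · exact h1.trans hl'
          · rcases hflip x y with ⟨_, h2⟩ | ⟨_, h2⟩
            · exact h2.trans hl'
            · exact h2.trans hl
        · have : ⁅b (Sum.inl x), b (Sum.inl y)⁆ = -(b (Sum.inr l')) := by
            rw [← lie_skew, hb1 y x l' hl']
          rw [this, map_neg, heb, ← lie_skew, edge y x l' hl']
      · rw [hb1 x y l hl, heb, edge x y l hl]
    · rw [hb''] at *
      have h1 : ⁅b (Sum.inl x), b (Sum.inr l')⁆ = 0 := by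
        rw [← lie_skew, hb3 l' (b (Sum.inl x)), neg_zero]
      have h2 : ⁅e (b (Sum.inl x)), e (b (Sum.inr l'))⁆ = 0 := by
        rw [heb (Sum.inr l'), lie_smul, ← lie_skew, hb'3 l' (e (b (Sum.inl x))),
          neg_zero, smul_zero]
      rw [h1, h2, map_zero]
    · rw [hb3 l (b (Sum.inl y)), map_zero, heb (Sum.inr l), smul_lie,
        hb'3 l _, smul_zero]
    · rw [hb3 l (b (Sum.inr l')), map_zero, heb (Sum.inr l), smul_lie,
        hb'3 l _, smul_zero]
  have main : ∀ x y : L, e ⁅x, y⁆ = ⁅e x, e y⁆ := by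
    have hB : (LinearMap.mk₂ F (fun x y : L => e ⁅x, y⁆)
        (by intro x y z; simp [add_lie])
        (by intro c x y; simp [smul_lie])
        (by intro x y z; simp [lie_add])
        (by intro c x y; simp [lie_smul]))
        = (LinearMap.mk₂ F (fun x y : L => ⁅e x, e y⁆)
        (by intro x y z; simp [add_lie])
        (by intro c x y; simp [smul_lie])
        (by intro x y z; simp [lie_add])
        (by intro c x y; simp [lie_smul])) :=
      b.ext fun i => b.ext fun j => key i j
    intro x y
    exact DFunLike.congr_fun (DFunLike.congr_fun hB x) y
  exact ⟨{ e with map_lie' := by intro x y; exact main x y }⟩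
end

section
/- Let D be a strata-preserving derivation of the Lie algebra Lie(G_2) associated to K_{m,n} with all mn labels distinct, and write D(x_i) = Σ_r α_{ri} x_r + Σ_s β_{si} y_s and D(y_j) = Σ_r γ_{rj} x_r + Σ_s δ_{sj} y_s. If m ≥ 2 then all coefficients β_{si} vanish, and if n ≥ 2 then all coefficients γ_{rj} vanish; i.e., D preserves the subspaces span(X) and span(Y). -/
/-- For the Lie algebra of `K_{m,n}` with all `mn` labels distinct, any strata-preserving
derivation `D` satisfies: if `m ≥ 2` then the `Y`-coefficients `β_{si}` of `D(xᵢ)` all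
vanish, and if `n ≥ 2` then the `X`-coefficients `γ_{rj}` of `D(yⱼ)` all vanish; that is,
`D` preserves the subspaces `span(X)` and `span(Y)`. -/
theorem stmt12 {F L : Type*} [Field F] [LieRing L] [LieAlgebra F L]
    (hchar : (2 : F) ≠ 0) (m n : ℕ)
    (b : Module.Basis ((Fin m ⊕ Fin n) ⊕ (Fin m × Fin n)) F L)
    (hxy : ∀ (i : Fin m) (j : Fin n),
        ⁅b (Sum.inl (Sum.inl i)), b (Sum.inl (Sum.inr j))⁆ = b (Sum.inr (i, j)))
    (hxx : ∀ i i' : Fin m, ⁅b (Sum.inl (Sum.inl i)), b (Sum.inl (Sum.inl i'))⁆ = 0)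
    (hyy : ∀ j j' : Fin n, ⁅b (Sum.inl (Sum.inr j)), b (Sum.inl (Sum.inr j'))⁆ = 0)
    (hc : ∀ (ij : Fin m × Fin n) (z : L), ⁅b (Sum.inr ij), z⁆ = 0)
    (D : LieDerivation F L L)
    (hD1 : ∀ v ∈ Submodule.span F (Set.range (b ∘ Sum.inl)),
        D v ∈ Submodule.span F (Set.range (b ∘ Sum.inl)))
    (hD2 : ∀ v ∈ Submodule.span F (Set.range (b ∘ Sum.inr)),
        D v ∈ Submodule.span F (Set.range (b ∘ Sum.inr))) :
    (2 ≤ m → ∀ (i : Fin m) (s : Fin n),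
        b.repr (D (b (Sum.inl (Sum.inl i)))) (Sum.inl (Sum.inr s)) = 0) ∧
    (2 ≤ n → ∀ (j : Fin n) (r : Fin m),
        b.repr (D (b (Sum.inl (Sum.inr j)))) (Sum.inl (Sum.inl r)) = 0) ∧
    (2 ≤ m → ∀ i : Fin m, D (b (Sum.inl (Sum.inl i))) ∈
        Submodule.span F (Set.range fun r : Fin m => b (Sum.inl (Sum.inl r)))) ∧
    (2 ≤ n → ∀ j : Fin n, D (b (Sum.inl (Sum.inr j))) ∈
        Submodule.span F (Set.range fun s : Fin n => b (Sum.inl (Sum.inr s)))) := by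
  -- key computation: coordinates of ⁅xₚ, v⁆ at a central basis vector
  have keyx : ∀ (p q : Fin m) (s0 : Fin n) (v : L),
      b.repr ⁅b (Sum.inl (Sum.inl p)), v⁆ (Sum.inr (q, s0)) =
        if q = p then b.repr v (Sum.inl (Sum.inr s0)) else 0 := by
    intro p q s0 v
    have hmaps :
        (Finsupp.lapply (Sum.inr (q, s0)) ∘ₗ b.repr.toLinearMap ∘ₗ
            LieAlgebra.ad F L (b (Sum.inl (Sum.inl p)))) =
          (if q = p then (Finsupp.lapply (Sum.inl (Sum.inr s0)) ∘ₗ b.repr.toLinearMap)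
            else 0) := by
      apply b.ext
      rintro ((r | s) | ij)
      · simp only [LinearMap.coe_comp, Function.comp_apply, LieHom.coe_toLinearMap,
          LieAlgebra.ad_apply, hxx, map_zero, Finsupp.coe_zero, Pi.zero_apply]
        split <;> simp [Finsupp.single_apply]
      · simp only [LinearMap.coe_comp, Function.comp_apply, LieHom.coe_toLinearMap,
          LieAlgebra.ad_apply, hxy, Module.Basis.repr_self, Finsupp.lapply_apply,
          Finsupp.single_apply]
        by_cases h1 : q = p <;> by_cases h2 : s0 = s <;>
          (try simp [h1, h2, Finsupp.single_apply, Prod.ext_iff]) <;> aesop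
      · have hz : ⁅b (Sum.inl (Sum.inl p)), b (Sum.inr ij)⁆ = 0 := by
          rw [← lie_skew, hc]; simp
        simp only [LinearMap.coe_comp, Function.comp_apply, LieHom.coe_toLinearMap,
          LieAlgebra.ad_apply, hz, map_zero, Finsupp.coe_zero, Pi.zero_apply]
        split <;> simp [Finsupp.single_apply]
    have h := LinearMap.congr_fun hmaps v
    simp only [LinearMap.coe_comp, Function.comp_apply, LieHom.coe_toLinearMap,
      LieAlgebra.ad_apply, apply_ite (fun g : L →ₗ[F] F => g v), LinearMap.zero_apply,
      Finsupp.lapply_apply] at h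
    simpa using h
  have keyy : ∀ (p q : Fin n) (r0 : Fin m) (v : L),
      b.repr ⁅b (Sum.inl (Sum.inr p)), v⁆ (Sum.inr (r0, q)) =
        if q = p then -(b.repr v (Sum.inl (Sum.inl r0))) else 0 := by
    intro p q r0 v
    have hmaps :
        (Finsupp.lapply (Sum.inr (r0, q)) ∘ₗ b.repr.toLinearMap ∘ₗ
            LieAlgebra.ad F L (b (Sum.inl (Sum.inr p)))) =
          (if q = p then (-(Finsupp.lapply (Sum.inl (Sum.inl r0)) ∘ₗ b.repr.toLinearMap))
            else 0) := by
      apply b.ext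
      rintro ((r | s) | ij)
      · have hz : ⁅b (Sum.inl (Sum.inr p)), b (Sum.inl (Sum.inl r))⁆ = -b (Sum.inr (r, p)) := by
          rw [← lie_skew, hxy]
        simp only [LinearMap.coe_comp, Function.comp_apply, LieHom.coe_toLinearMap,
          LieAlgebra.ad_apply, hz, map_neg, Module.Basis.repr_self, Finsupp.lapply_apply,
          Finsupp.neg_apply, Finsupp.single_apply]
        by_cases h1 : q = p <;> by_cases h2 : r0 = r <;>
          (try simp [h1, h2, Finsupp.single_apply, Prod.ext_iff]) <;> aesop
      · simp only [LinearMap.coe_comp, Function.comp_apply, LieHom.coe_toLinearMap,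
          LieAlgebra.ad_apply, hyy, map_zero, Finsupp.coe_zero, Pi.zero_apply]
        split <;> simp [Finsupp.single_apply]
      · have hz : ⁅b (Sum.inl (Sum.inr p)), b (Sum.inr ij)⁆ = 0 := by
          rw [← lie_skew, hc]; simp
        simp only [LinearMap.coe_comp, Function.comp_apply, LieHom.coe_toLinearMap,
          LieAlgebra.ad_apply, hz, map_zero, Finsupp.coe_zero, Pi.zero_apply]
        split <;> simp [Finsupp.single_apply]
    have h := LinearMap.congr_fun hmaps v
    simp only [LinearMap.coe_comp, Function.comp_apply, LieHom.coe_toLinearMap,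
      LieAlgebra.ad_apply, apply_ite (fun g : L →ₗ[F] F => g v), LinearMap.zero_apply,
      LinearMap.neg_apply, Finsupp.lapply_apply] at h
    simpa using h
  have hbeta : 2 ≤ m → ∀ (i : Fin m) (s : Fin n),
      b.repr (D (b (Sum.inl (Sum.inl i)))) (Sum.inl (Sum.inr s)) = 0 := by
    intro hm i s
    have : Nontrivial (Fin m) := Fin.nontrivial_iff_two_le.mpr hm
    obtain ⟨i', hi'⟩ := exists_ne i
    have h0 : D ⁅b (Sum.inl (Sum.inl i)), b (Sum.inl (Sum.inl i'))⁆ = 0 := by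
      rw [hxx]; simp
    rw [LieDerivation.apply_lie_eq_sub] at h0
    have h1 := congrArg (fun v => b.repr v (Sum.inr (i', s))) h0
    simp only [map_sub, Finsupp.sub_apply, map_zero, Finsupp.coe_zero, Pi.zero_apply] at h1
    rw [keyx, keyx] at h1
    simp only [if_neg hi', if_pos rfl] at h1
    simpa using h1
  have hgamma : 2 ≤ n → ∀ (j : Fin n) (r : Fin m),
      b.repr (D (b (Sum.inl (Sum.inr j)))) (Sum.inl (Sum.inl r)) = 0 := by
    intro hn j r
    have : Nontrivial (Fin n) := Fin.nontrivial_iff_two_le.mpr hn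
    obtain ⟨j', hj'⟩ := exists_ne j
    have h0 : D ⁅b (Sum.inl (Sum.inr j)), b (Sum.inl (Sum.inr j'))⁆ = 0 := by
      rw [hyy]; simp
    rw [LieDerivation.apply_lie_eq_sub] at h0
    have h1 := congrArg (fun v => b.repr v (Sum.inr (r, j'))) h0
    simp only [map_sub, Finsupp.sub_apply, map_zero, Finsupp.coe_zero, Pi.zero_apply] at h1
    rw [keyy, keyy] at h1
    simp only [if_neg hj', if_pos rfl] at h1
    simpa using h1
  refine ⟨hbeta, hgamma, ?_, ?_⟩
  · intro hm i
    have hmem : D (b (Sum.inl (Sum.inl i))) ∈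
        Submodule.span F (Set.range (b ∘ Sum.inl)) :=
      hD1 _ (Submodule.subset_span ⟨Sum.inl i, rfl⟩)
    rw [Set.range_comp, Module.Basis.mem_span_image] at hmem
    have : Set.range (fun r : Fin m => b (Sum.inl (Sum.inl r))) =
        b '' Set.range (fun r : Fin m => Sum.inl (Sum.inl r)) := by
      rw [← Set.range_comp]; rfl
    rw [this, Module.Basis.mem_span_image]
    intro k hk
    have hk' := hmem hk
    obtain ⟨u, hu⟩ := hk'
    rcases u with r | s
    · exact ⟨r, hu⟩
    · exfalso
      have : k ∈ (b.repr (D (b (Sum.inl (Sum.inl i))))).support := hk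
      rw [Finsupp.mem_support_iff] at this
      rw [← hu] at this
      exact this (hbeta hm i s)
  · intro hn j
    have hmem : D (b (Sum.inl (Sum.inr j))) ∈
        Submodule.span F (Set.range (b ∘ Sum.inl)) :=
      hD1 _ (Submodule.subset_span ⟨Sum.inr j, rfl⟩)
    rw [Set.range_comp, Module.Basis.mem_span_image] at hmem
    have : Set.range (fun s : Fin n => b (Sum.inl (Sum.inr s))) =
        b '' Set.range (fun s : Fin n => Sum.inl (Sum.inr s)) := by
      rw [← Set.range_comp]; rfl
    rw [this, Module.Basis.mem_span_image]
    intro k hk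
    have hk' := hmem hk
    obtain ⟨u, hu⟩ := hk'
    rcases u with r | s
    · exfalso
      have : k ∈ (b.repr (D (b (Sum.inl (Sum.inr j))))).support := hk
      rw [Finsupp.mem_support_iff] at this
      rw [← hu] at this
      exact this (hgamma hn j r)
    · exact ⟨s, hu⟩
end

section
/- Let D be a strata-preserving derivation of Lie(G_1), the Lie algebra of K_{m,n} with a single label u, with D(u) = λu, D(x_i) = Σ_r α_{ri} x_r + Σ_s β_{si} y_s, D(y_j) = Σ_r γ_{rj} x_r + Σ_s δ_{sj} y_s. Then for all i, i', j, j': Σ_s β_{si} = Σ_s β_{si'}, Σ_r γ_{rj} = Σ_r γ_{rj'}, and Σ_r α_{ri} + Σ_s δ_{sj} = λ. Conversely, any linear map of this form satisfying these equations is a derivation. -/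
open Finset in
/-- Characterization of the strata-preserving derivations of the Lie algebra `Lie(G₁)` of
`K_{m,n}` with a single label `u`: a strata-preserving linear map `f` with
`f(xᵢ) = Σ_r α_{ri} x_r + Σ_s β_{si} y_s`, `f(yⱼ) = Σ_r γ_{rj} x_r + Σ_s δ_{sj} y_s` and
`f(u) = λ u` is a derivation if and only if for all `i, i', j, j'` one has
`Σ_s β_{si} = Σ_s β_{si'}`, `Σ_r γ_{rj} = Σ_r γ_{rj'}` and
`Σ_r α_{ri} + Σ_s δ_{sj} = λ`. -/
theorem stmt13 {F L : Type*} [Field F] [LieRing L] [LieAlgebra F L]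
    (hchar : (2 : F) ≠ 0) (m n : ℕ)
    (b : Module.Basis ((Fin m ⊕ Fin n) ⊕ Unit) F L)
    (hxy : ∀ (i : Fin m) (j : Fin n),
        ⁅b (Sum.inl (Sum.inl i)), b (Sum.inl (Sum.inr j))⁆ = b (Sum.inr ()))
    (hxx : ∀ i i' : Fin m, ⁅b (Sum.inl (Sum.inl i)), b (Sum.inl (Sum.inl i'))⁆ = 0)
    (hyy : ∀ j j' : Fin n, ⁅b (Sum.inl (Sum.inr j)), b (Sum.inl (Sum.inr j'))⁆ = 0)
    (hu : ∀ z : L, ⁅b (Sum.inr ()), z⁆ = 0)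
    (f : L →ₗ[F] L)
    (hf1 : ∀ v ∈ Submodule.span F (Set.range (b ∘ Sum.inl)),
        f v ∈ Submodule.span F (Set.range (b ∘ Sum.inl)))
    (hf2 : f (b (Sum.inr ())) ∈ F ∙ b (Sum.inr ())) :
    (∀ u v : L, f ⁅u, v⁆ = ⁅f u, v⁆ + ⁅u, f v⁆) ↔
    ((∀ i i' : Fin m,
        ∑ s : Fin n, b.repr (f (b (Sum.inl (Sum.inl i)))) (Sum.inl (Sum.inr s)) =
        ∑ s : Fin n, b.repr (f (b (Sum.inl (Sum.inl i')))) (Sum.inl (Sum.inr s))) ∧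
     (∀ j j' : Fin n,
        ∑ r : Fin m, b.repr (f (b (Sum.inl (Sum.inr j)))) (Sum.inl (Sum.inl r)) =
        ∑ r : Fin m, b.repr (f (b (Sum.inl (Sum.inr j')))) (Sum.inl (Sum.inl r))) ∧
     (∀ (i : Fin m) (j : Fin n),
        (∑ r : Fin m, b.repr (f (b (Sum.inl (Sum.inl i)))) (Sum.inl (Sum.inl r))) +
        (∑ s : Fin n, b.repr (f (b (Sum.inl (Sum.inr j)))) (Sum.inl (Sum.inr s))) =
        b.repr (f (b (Sum.inr ()))) (Sum.inr ()))) := by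
  classical
  set X : L →ₗ[F] F := ∑ r : Fin m, b.coord (Sum.inl (Sum.inl r)) with hXset
  set Y : L →ₗ[F] F := ∑ s : Fin n, b.coord (Sum.inl (Sum.inr s)) with hYset
  have hXdef : ∀ v, X v = ∑ r : Fin m, b.repr v (Sum.inl (Sum.inl r)) := by
    intro v; rw [hXset]; simp [Module.Basis.coord_apply]
  have hYdef : ∀ v, Y v = ∑ s : Fin n, b.repr v (Sum.inl (Sum.inr s)) := by
    intro v; rw [hYset]; simp [Module.Basis.coord_apply]
  have hXx : ∀ i : Fin m, X (b (Sum.inl (Sum.inl i))) = 1 := by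
    intro i; rw [hXdef]; simp [Finsupp.single_apply]
  have hXy : ∀ j : Fin n, X (b (Sum.inl (Sum.inr j))) = 0 := by
    intro j; rw [hXdef]; simp [Finsupp.single_apply]
  have hXu : X (b (Sum.inr ())) = 0 := by
    rw [hXdef]; simp [Finsupp.single_apply]
  have hYx : ∀ i : Fin m, Y (b (Sum.inl (Sum.inl i))) = 0 := by
    intro i; rw [hYdef]; simp [Finsupp.single_apply]
  have hYy : ∀ j : Fin n, Y (b (Sum.inl (Sum.inr j))) = 1 := by
    intro j; rw [hYdef]; simp [Finsupp.single_apply]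
  have hYu : Y (b (Sum.inr ())) = 0 := by
    rw [hYdef]; simp [Finsupp.single_apply]
  have hskew : ∀ z : L, ⁅z, b (Sum.inr ())⁆ = 0 := fun z => by
    rw [← lie_skew, hu z, neg_zero]
  have hyx : ∀ (j : Fin n) (i : Fin m),
      ⁅b (Sum.inl (Sum.inr j)), b (Sum.inl (Sum.inl i))⁆ = -(b (Sum.inr ())) := fun j i => by
    rw [← lie_skew, hxy]
  -- the bracket as a bilinear map, and its coordinate description
  set ad' : L →ₗ[F] L →ₗ[F] L :=
    LinearMap.mk₂ F (fun v w => ⁅v, w⁆) add_lie smul_lie lie_add lie_smul with had'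
  set G : L →ₗ[F] L →ₗ[F] L :=
    LinearMap.mk₂ F (fun v w => (X v * Y w - Y v * X w) • b (Sum.inr ()))
      (fun v v' w => by rw [map_add, map_add, ← add_smul]; congr 1; ring)
      (fun c v w => by
        rw [map_smul, map_smul, smul_eq_mul, smul_eq_mul, smul_smul]; congr 1; ring)
      (fun v w w' => by rw [map_add, map_add, ← add_smul]; congr 1; ring)
      (fun c v w => by
        rw [map_smul, map_smul, smul_eq_mul, smul_eq_mul, smul_smul]; congr 1; ring)
      with hG
  have hadapp : ∀ v w : L, ad' v w = ⁅v, w⁆ := fun _ _ => rfl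
  have hGapp : ∀ v w : L, G v w = (X v * Y w - Y v * X w) • b (Sum.inr ()) := fun _ _ => rfl
  have hadG : ad' = G := by
    apply b.ext; intro k; apply b.ext; intro k'
    rw [hadapp, hGapp]
    rcases k with (i | j) | ⟨⟩ <;> rcases k' with (i' | j') | ⟨⟩ <;>
      simp [hXx, hXy, hXu, hYx, hYy, hYu, hxx, hxy, hyy, hyx, hu, hskew]
  have key : ∀ v w : L, ⁅v, w⁆ = (X v * Y w - Y v * X w) • b (Sum.inr ()) := fun v w => by
    rw [← hadapp, hadG, hGapp]
  have hlam : f (b (Sum.inr ())) =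
      (b.repr (f (b (Sum.inr ()))) (Sum.inr ())) • b (Sum.inr ()) := by
    obtain ⟨c, hc⟩ := Submodule.mem_span_singleton.mp hf2
    rw [← hc]; simp [Finsupp.single_apply]
  constructor
  · intro hD
    refine ⟨fun i i' => ?_, fun j j' => ?_, fun i j => ?_⟩
    · have h := hD (b (Sum.inl (Sum.inl i))) (b (Sum.inl (Sum.inl i')))
      rw [hxx, map_zero, key, key] at h
      simp only [hXx, hYx] at h
      have h2 := congrArg (fun z => b.repr z (Sum.inr ())) h
      simp [Finsupp.single_apply] at h2
      rw [← hYdef, ← hYdef]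
      linear_combination h2
    · have h := hD (b (Sum.inl (Sum.inr j))) (b (Sum.inl (Sum.inr j')))
      rw [hyy, map_zero, key, key] at h
      simp only [hXy, hYy] at h
      have h2 := congrArg (fun z => b.repr z (Sum.inr ())) h
      simp [Finsupp.single_apply] at h2
      rw [← hXdef, ← hXdef]
      linear_combination -h2
    · have h := hD (b (Sum.inl (Sum.inl i))) (b (Sum.inl (Sum.inr j)))
      rw [hxy, key, key] at h
      simp only [hXx, hYx, hXy, hYy] at h
      have h2 := congrArg (fun z => b.repr z (Sum.inr ())) h
      simp [Finsupp.single_apply] at h2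
      rw [← hXdef, ← hYdef]
      linear_combination -h2
  · rintro ⟨h1, h2, h3⟩ v w
    rw [key v w, map_smul, hlam, smul_smul, key (f v) w, key v (f w), ← add_smul]
    congr 1
    rcases isEmpty_or_nonempty (Fin m) with hm | hm
    · have hX0 : ∀ z, X z = 0 := fun z => by rw [hXdef]; simp
      simp only [hX0]; ring
    rcases isEmpty_or_nonempty (Fin n) with hn | hn
    · have hY0 : ∀ z, Y z = 0 := fun z => by rw [hYdef]; simp
      simp only [hY0]; ring
    obtain ⟨i0⟩ := hm
    obtain ⟨j0⟩ := hn
    have h1' : ∀ i, Y (f (b (Sum.inl (Sum.inl i)))) = Y (f (b (Sum.inl (Sum.inl i0)))) :=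
      fun i => by rw [hYdef, hYdef]; exact h1 i i0
    have h2' : ∀ j, X (f (b (Sum.inl (Sum.inr j)))) = X (f (b (Sum.inl (Sum.inr j0)))) :=
      fun j => by rw [hXdef, hXdef]; exact h2 j j0
    have h3' : ∀ i j, X (f (b (Sum.inl (Sum.inl i)))) + Y (f (b (Sum.inl (Sum.inr j)))) =
        b.repr (f (b (Sum.inr ()))) (Sum.inr ()) :=
      fun i j => by rw [hXdef, hYdef]; exact h3 i j
    have hA : ∀ i, X (f (b (Sum.inl (Sum.inl i)))) = X (f (b (Sum.inl (Sum.inl i0)))) :=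
      fun i => by have e1 := h3' i j0; have e2 := h3' i0 j0; linear_combination e1 - e2
    have hDl : ∀ j, Y (f (b (Sum.inl (Sum.inr j)))) = Y (f (b (Sum.inl (Sum.inr j0)))) :=
      fun j => by have e1 := h3' i0 j; have e2 := h3' i0 j0; linear_combination e1 - e2
    have hXf : ∀ z, X (f z) =
        X (f (b (Sum.inl (Sum.inl i0)))) * X z + X (f (b (Sum.inl (Sum.inr j0)))) * Y z := by
      have hmap : X.comp f =
          X (f (b (Sum.inl (Sum.inl i0)))) • X + X (f (b (Sum.inl (Sum.inr j0)))) • Y := by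
        apply b.ext; intro k
        rcases k with (i | j) | ⟨⟩ <;>
          simp [hXx, hXy, hXu, hYx, hYy, hYu, hA, h2']
        rw [hlam, map_smul, hXu]; simp
      intro z
      have := LinearMap.congr_fun hmap z
      simpa [smul_eq_mul] using this
    have hYf : ∀ z, Y (f z) =
        Y (f (b (Sum.inl (Sum.inl i0)))) * X z + Y (f (b (Sum.inl (Sum.inr j0)))) * Y z := by
      have hmap : Y.comp f =
          Y (f (b (Sum.inl (Sum.inl i0)))) • X + Y (f (b (Sum.inl (Sum.inr j0)))) • Y := by
        apply b.ext; intro k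
        rcases k with (i | j) | ⟨⟩ <;>
          simp [hXx, hXy, hXu, hYx, hYy, hYu, h1', hDl]
        rw [hlam, map_smul, hYu]; simp
      intro z
      have := LinearMap.congr_fun hmap z
      simpa [smul_eq_mul] using this
    have hlam' : b.repr (f (b (Sum.inr ()))) (Sum.inr ()) =
        X (f (b (Sum.inl (Sum.inl i0)))) + Y (f (b (Sum.inl (Sum.inr j0)))) := (h3' i0 j0).symm
    rw [hXf v, hXf w, hYf v, hYf w, hlam']
    ring
end

section
/- Let G = (V, E, c) be a labeled directed graph such that each label appears at most once in each connected component of G, and let G' = (V, E', c) be the graph obtained by simultaneously reversing the direction of all edges carrying a fixed label. Then Lie(G) ≅ Lie(G'). -/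
/-- Suppose each label appears at most once in each connected component of `G`, and `G'`
is obtained from `G` by simultaneously reversing the direction of all edges carrying the
fixed label `l₀`. Then `Lie(G) ≅ Lie(G')`. -/
theorem stmt15 {V C F L L' : Type*} [Field F] [DecidableEq C]
    [LieRing L] [LieAlgebra F L] [LieRing L'] [LieAlgebra F L']
    (hchar : (2 : F) ≠ 0)
    (G G' : LabeledDigraph V C) (l₀ : C)
    (honce : ∀ (x y x' y' : V) (l : C), G.lab x y = some l → G.lab x' y' = some l →
        Relation.ReflTransGen G.adj x x' → x = x' ∧ y = y')
    (hrev : ∀ x y : V, G'.lab x y =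
        if G.lab y x = some l₀ then some l₀
        else if G.lab x y = some l₀ then none
        else G.lab x y)
    (b : Module.Basis (V ⊕ C) F L) (hb : IsGraphLieAlg G b)
    (b' : Module.Basis (V ⊕ C) F L') (hb' : IsGraphLieAlg G' b') :
    Nonempty (L ≃ₗ⁅F⁆ L') := by
  classical
  set u : V ⊕ C → Fˣ := fun i => if i = Sum.inr l₀ then -1 else 1 with hu
  set e : L ≃ₗ[F] L' := b.equiv (b'.unitsSMul u) (Equiv.refl _) with he_def
  have he : ∀ i, e (b i) = (u i : F) • b' i := by
    intro i
    rw [he_def, Module.Basis.equiv_apply, Equiv.refl_apply, Module.Basis.unitsSMul_apply, Units.smul_def]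
  have he_inl : ∀ x : V, e (b (Sum.inl x)) = b' (Sum.inl x) := by
    intro x
    rw [he]
    simp [hu]
  have key : ∀ i j, e ⁅b i, b j⁆ = ⁅e (b i), e (b j)⁆ := by
    rintro (x | m) (y | n)
    · -- both vertices
      rw [he_inl, he_inl]
      rcases hxy : G.lab x y with _ | m
      · rcases hyx : G.lab y x with _ | m
        · rw [hb.2.1 x y hxy hyx, map_zero, hb'.2.1 x y, eq_comm]
          · rw [hrev, hxy, hyx]; simp
          · rw [hrev, hyx, hxy]; simp
        · have hxy' : ⁅b (Sum.inl x), b (Sum.inl y)⁆ = -b (Sum.inr m) := by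
            rw [← lie_skew, hb.1 y x m hyx]
          rw [hxy', map_neg, he]
          by_cases hm : m = l₀
          · subst hm
            have : G'.lab x y = some m := by rw [hrev, hyx]; simp
            rw [hb'.1 x y m this]
            simp [hu]
          · have : G'.lab y x = some m := by
              rw [hrev, hxy, hyx]
              simp [Option.some_inj, hm]
            rw [← lie_skew, hb'.1 y x m this]
            simp [hu, hm]
      · have hyx : G.lab y x = none := G.one_dir x y (by rw [hxy]; rfl)
        rw [hb.1 x y m hxy, he]
        by_cases hm : m = l₀
        · subst hm
          have : G'.lab y x = some m := by rw [hrev, hxy]; simp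
          rw [← lie_skew, hb'.1 y x m this]
          simp [hu]
        · have : G'.lab x y = some m := by
            rw [hrev, hxy, hyx]
            simp [Option.some_inj, hm]
          rw [hb'.1 x y m this]
          simp [hu, hm]
    · -- second is a label
      rw [← lie_skew, hb.2.2 n, neg_zero, map_zero, he (Sum.inr n), ← lie_skew, smul_lie,
        hb'.2.2 n, smul_zero, neg_zero]
    · rw [hb.2.2 m, map_zero, he (Sum.inr m), smul_lie, hb'.2.2 m, smul_zero]
    · rw [hb.2.2 m, map_zero, he (Sum.inr m), smul_lie, hb'.2.2 m, smul_zero]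
  have hmain : ∀ x y : L, e ⁅x, y⁆ = ⁅e x, e y⁆ := by
    letI : LieRing (Module.End F L) := LieRing.ofAssociativeRing
    letI : LieRing (Module.End F L') := LieRing.ofAssociativeRing
    have hmaps :
        ((LinearMap.llcomp F L L L' e.toLinearMap).comp (LieModule.toEnd F L L).toLinearMap)
          = (LinearMap.lcomp F L' e.toLinearMap).comp
              (((LieModule.toEnd F L' L').toLinearMap).comp e.toLinearMap) := by
      apply b.ext
      intro i
      apply b.ext
      intro j
      simpa using key i j
    intro x y
    have := LinearMap.congr_fun (LinearMap.congr_fun hmaps x) y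
    simpa using this
  exact ⟨{ e with map_lie' := fun {x y} => hmain x y }⟩
end
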